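/- For all reals y ≥ 0 and r ≥ 0, |Σ_{j=1}^∞ ((-y)^j / j!) · P(Poisson(r) < j)| ≤ e^{-r}·(1 - e^{-y}). -/

import Mathlib

open MeasureTheory Finset

lemma exp_tsum (x : ℝ) : Real.exp x = ∑' n : ℕ, x ^ n / (n.factorial : ℝ) := by
  rw [Real.exp_eq_exp_ℝ, NormedSpace.exp_eq_tsum_div]

lemma wallis (l : ℕ) : ∏ i ∈ range l, ((2 * (i:ℝ) + 1) / (2 * i + 2)) =
    ((2*l).factorial : ℝ) / (4 ^ l * ((l.factorial : ℝ))^2) := by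
  induction l with
  | zero => simp
  | succ k ih =>
    rw [prod_range_succ, ih]
    have h1 : (2*(k+1)) = (2*k) + 1 + 1 := by ring
    rw [h1]
    push_cast [Nat.factorial_succ]
    have h2 : (4:ℝ)^k > 0 := by positivity
    have h3 : ((2*k).factorial : ℝ) > 0 := by positivity
    have h4 : ((k.factorial : ℝ)) > 0 := by positivity
    field_simp
    ring

open Real in
lemma bessel_bound {z : ℝ} (hz : 0 ≤ z) :
    |∑' l : ℕ, (-z) ^ l / ((l.factorial : ℝ))^2| ≤ 1 := by
  set w : ℝ := 2 * Real.sqrt z with hw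
  have hw0 : 0 ≤ w := by positivity
  have hwsq : w ^ 2 = 4 * z := by
    rw [hw, mul_pow, Real.sq_sqrt hz]; ring
  set F : ℕ → ℝ → ℝ := fun n θ => (-1) ^ n * (w * Real.sin θ) ^ (2 * n) / ((2 * n).factorial : ℝ)
    with hF
  have hFcont : ∀ n, Continuous (F n) := by
    intro n; fun_prop
  have hFint : ∀ n, IntegrableOn (F n) (Set.Ioc 0 π) := by
    intro n; exact (hFcont n).integrableOn_Ioc
  have hFbound : ∀ n, ∀ θ, ‖F n θ‖ ≤ w ^ (2 * n) / ((2 * n).factorial : ℝ) := by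
    intro n θ
    rw [hF]
    simp only [norm_mul, norm_div, norm_pow, norm_neg, norm_one, one_pow, one_mul,
      Real.norm_eq_abs]
    rw [abs_of_nonneg (by positivity : (0:ℝ) ≤ ((2*n).factorial : ℝ))]
    gcongr
    rw [abs_of_nonneg hw0]
    nlinarith [Real.abs_sin_le_one θ, hw0, abs_nonneg (Real.sin θ)]
  have hsum0 : Summable (fun n : ℕ => w ^ (2 * n) / ((2 * n).factorial : ℝ)) := by
    have := (Real.summable_pow_div_factorial w).comp_injective
      (fun a b h => by dsimp at h; omega : Function.Injective (fun n : ℕ => 2 * n))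
    exact this
  have hnormsum : Summable (fun n => ∫ θ in Set.Ioc 0 π, ‖F n θ‖) := by
    apply Summable.of_nonneg_of_le
      (fun n => integral_nonneg fun θ => norm_nonneg _)
      (fun n => ?_) (hsum0.mul_right π)
    calc (∫ θ in Set.Ioc 0 π, ‖F n θ‖)
        ≤ ∫ _ in Set.Ioc 0 π, (w ^ (2 * n) / ((2 * n).factorial : ℝ)) := by
          apply setIntegral_mono_on ((hFint n).norm)
            (integrableOn_const (by rw [Real.volume_Ioc]; exact ENNReal.ofReal_ne_top))
            measurableSet_Ioc (fun θ _ => hFbound n θ)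
      _ = w ^ (2 * n) / ((2 * n).factorial : ℝ) * π := by
          rw [setIntegral_const, smul_eq_mul, Real.volume_real_Ioc_of_le pi_pos.le, sub_zero,
            mul_comm]
  have hswap : ∑' n, (∫ θ in Set.Ioc 0 π, F n θ) = ∫ θ in Set.Ioc 0 π, Real.cos (w * Real.sin θ) := by
    rw [MeasureTheory.integral_tsum_of_summable_integral_norm hFint hnormsum]
    apply setIntegral_congr_fun measurableSet_Ioc
    intro θ _
    exact (Real.cos_eq_tsum (w * Real.sin θ)).symm
  have hval : ∀ n, (∫ θ in Set.Ioc 0 π, F n θ) = π * ((-z) ^ n / ((n.factorial : ℝ))^2) := by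
    intro n
    rw [← intervalIntegral.integral_of_le pi_pos.le]
    have : ∀ θ, F n θ = ((-1) ^ n * w ^ (2*n) / ((2 * n).factorial : ℝ)) * Real.sin θ ^ (2*n) := by
      intro θ; rw [hF]; rw [mul_pow]; ring
    simp_rw [this]
    rw [intervalIntegral.integral_const_mul, integral_sin_pow_even, wallis]
    have h1 : w ^ (2 * n) = (4 * z) ^ n := by rw [pow_mul, hwsq]
    have h2 : ((2*n).factorial : ℝ) > 0 := by positivity
    have h3 : ((n.factorial : ℝ)) > 0 := by positivity
    have h4 : (0:ℝ) < 4 ^ n := by positivity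
    rw [h1, mul_pow, neg_pow]
    field_simp
    ring
  have hkey : ∑' l : ℕ, (-z) ^ l / ((l.factorial : ℝ))^2
      = (1 / π) * ∫ θ in (0:ℝ)..π, Real.cos (w * Real.sin θ) := by
    rw [intervalIntegral.integral_of_le pi_pos.le, ← hswap]
    simp_rw [hval]
    rw [tsum_mul_left]
    field_simp
  rw [hkey, abs_mul, abs_of_nonneg (by positivity : (0:ℝ) ≤ 1/π)]
  have hbnd : |∫ θ in (0:ℝ)..π, Real.cos (w * Real.sin θ)| ≤ 1 * |π - 0| := by
    have := intervalIntegral.norm_integral_le_of_norm_le_const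
      (a := 0) (b := π) (C := 1) (f := fun θ => Real.cos (w * Real.sin θ))
      (fun x _ => by simpa using Real.abs_cos_le_one (w * Real.sin x))
    simpa using this
  rw [sub_zero, abs_of_nonneg pi_pos.le] at hbnd
  calc 1/π * |∫ θ in (0:ℝ)..π, Real.cos (w * Real.sin θ)| ≤ 1/π * (1 * π) := mul_le_mul_of_nonneg_left hbnd (by positivity)
    _ = 1 := by field_simp

lemma J_succ (y : ℝ) (l : ℕ) :
    ((l:ℝ)+1) * (∫ u in (0:ℝ)..y, (y-u)^l * Real.exp (-u))
      + (∫ u in (0:ℝ)..y, (y-u)^(l+1) * Real.exp (-u)) = y^(l+1) := by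
  have hd : ∀ x : ℝ, HasDerivAt (fun u => -((y-u)^(l+1) * Real.exp (-u)))
      (((l:ℝ)+1) * (y-x)^l * Real.exp (-x) + (y-x)^(l+1) * Real.exp (-x)) x := by
    intro x
    have h1 : HasDerivAt (fun u : ℝ => y - u) (-1) x := (hasDerivAt_id x).const_sub y
    have h2 := h1.fun_pow (l+1)
    have h3 : HasDerivAt (fun u : ℝ => Real.exp (-u)) (-Real.exp (-x)) x := by
      simpa using ((hasDerivAt_id x).neg).exp
    have h4 := (h2.fun_mul h3).fun_neg
    refine h4.congr_deriv ?_
    push_cast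
    ring
  have hcont : ∀ m : ℕ, Continuous (fun u => (y-u)^m * Real.exp (-u)) := by
    intro m; fun_prop
  have := intervalIntegral.integral_eq_sub_of_hasDerivAt (a := 0) (b := y)
    (fun x _ => hd x)
    (by apply Continuous.intervalIntegrable; fun_prop)
  rw [intervalIntegral.integral_add
      (by apply Continuous.intervalIntegrable; fun_prop)
      (by apply Continuous.intervalIntegrable; fun_prop)] at this
  simp_rw [mul_assoc] at this
  rw [intervalIntegral.integral_const_mul] at this
  rw [this]
  norm_num

lemma J_eq (y : ℝ) (l : ℕ) :
    ∫ u in (0:ℝ)..y, (y-u)^l * Real.exp (-u)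
      = (-1)^(l+1) * (l.factorial : ℝ) *
        (Real.exp (-y) - ∑ k ∈ Finset.range (l+1), (-y)^k / (k.factorial : ℝ)) := by
  induction l with
  | zero =>
    have hd : ∀ x : ℝ, HasDerivAt (fun u => -Real.exp (-u)) (Real.exp (-x)) x := by
      intro x
      simpa using ((hasDerivAt_id x).neg).exp.fun_neg
    have := intervalIntegral.integral_eq_sub_of_hasDerivAt (a := 0) (b := y)
      (fun x _ => hd x) (by apply Continuous.intervalIntegrable; fun_prop)
    simp only [pow_zero, one_mul]
    rw [this]
    simp
    ring
  | succ k ih =>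
    have h := J_succ y k
    rw [ih] at h
    have h2 : (∫ u in (0:ℝ)..y, (y-u)^(k+1) * Real.exp (-u))
        = y^(k+1) - ((k:ℝ)+1) * ((-1)^(k+1) * (k.factorial : ℝ) *
          (Real.exp (-y) - ∑ j ∈ Finset.range (k+1), (-y)^j / (j.factorial : ℝ))) := by
      linarith
    have hk : ((k+1).factorial : ℝ) = ((k:ℝ)+1) * (k.factorial : ℝ) := by
      push_cast [Nat.factorial_succ]; ring
    have e1 : ((-1:ℝ))^(k+1) = -(-1)^k := by rw [pow_succ]; ring
    have e2 : ((-1:ℝ))^(k+1+1) = (-1)^k := by rw [pow_succ, pow_succ]; ring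
    have e3 : (-y)^(k+1) = -((-1)^k * y^(k+1)) := by rw [neg_pow, e1]; ring
    have hne : (k.factorial : ℝ) ≠ 0 := by positivity
    have hk1 : ((k:ℝ)+1) ≠ 0 := by positivity
    rw [h2]
    conv_rhs => rw [Finset.sum_range_succ]
    rw [e1, e2, e3, hk]
    have hA : ((-1:ℝ))^k * (-1)^k = 1 := by rw [← mul_pow]; norm_num
    field_simp
    linear_combination (-(y * y^k)) * hA


noncomputable def Gaux (y r : ℝ) (p : ℕ × ℕ) : ℝ :=
  if p.2 < p.1 then (-y) ^ p.1 / (p.1.factorial : ℝ) *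
    (Real.exp (-r) * (r ^ p.2 / (p.2.factorial : ℝ))) else 0

lemma Gaux_pos {y r : ℝ} {j l : ℕ} (h : l < j) : Gaux y r (j, l) =
    (-y) ^ j / (j.factorial : ℝ) * (Real.exp (-r) * (r ^ l / (l.factorial : ℝ))) := if_pos h

lemma Gaux_zero {y r : ℝ} {j l : ℕ} (h : ¬ l < j) : Gaux y r (j, l) = 0 := if_neg h

set_option maxHeartbeats 1600000 in
theorem stmt_13 (y r : ℝ) (hy : 0 ≤ y) (hr : 0 ≤ r) :
    |∑' j : ℕ, (-y) ^ j / (j.factorial : ℝ) *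
        (Real.exp (-r) * ∑ l ∈ Finset.range j, r ^ l / (l.factorial : ℝ))| ≤
      Real.exp (-r) * (1 - Real.exp (-y)) := by
  -- the double-indexed family
  have hH : Summable (fun p : ℕ × ℕ =>
      (y ^ p.1 / (p.1.factorial : ℝ)) * (Real.exp (-r) * (r ^ p.2 / (p.2.factorial : ℝ)))) := by
    exact (Real.summable_pow_div_factorial y).mul_of_nonneg
      ((Real.summable_pow_div_factorial r).mul_left (Real.exp (-r)))
      (fun j => by positivity) (fun l => by positivity)
  have hG : Summable (Gaux y r) := by
    apply Summable.of_norm_bounded hH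
    intro p
    obtain ⟨j, l⟩ := p
    by_cases h : l < j
    · rw [Gaux_pos h, Real.norm_eq_abs, abs_mul, abs_div, abs_pow, abs_neg, abs_of_nonneg hy]
      rw [abs_of_nonneg (by positivity), abs_of_nonneg (by positivity)]
    · rw [Gaux_zero h]; simp only [norm_zero]; positivity
  -- main computation
  have hrow : ∀ l : ℕ, Summable (fun j => Gaux y r (j, l)) := fun l =>
    hG.comp_injective (fun a b hab => by simpa using (Prod.ext_iff.1 hab).1)
  have hcol : ∀ j : ℕ, Summable (fun l => Gaux y r (j, l)) := fun j =>
    hG.comp_injective (fun a b hab => by simpa using (Prod.ext_iff.1 hab).2)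
  have h1 : (∑' j : ℕ, (-y) ^ j / (j.factorial : ℝ) *
      (Real.exp (-r) * ∑ l ∈ Finset.range j, r ^ l / (l.factorial : ℝ))) = ∑' p, Gaux y r p := by
    rw [Summable.tsum_prod' hG hcol]
    refine tsum_congr (fun j => ?_)
    have hz : ∀ l ∉ Finset.range j, Gaux y r (j, l) = 0 := by
      intro l hl
      exact Gaux_zero (by simpa using hl)
    symm
    calc ∑' l : ℕ, Gaux y r (j, l) = ∑ l ∈ Finset.range j, Gaux y r (j, l) := tsum_eq_sum hz
      _ = ∑ l ∈ Finset.range j, (-y) ^ j / (j.factorial : ℝ) *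
            (Real.exp (-r) * (r ^ l / (l.factorial : ℝ))) :=
          Finset.sum_congr rfl (fun l hl => Gaux_pos (Finset.mem_range.1 hl))
      _ = (-y) ^ j / (j.factorial : ℝ) *
            (Real.exp (-r) * ∑ l ∈ Finset.range j, r ^ l / (l.factorial : ℝ)) := by
          rw [Finset.mul_sum, Finset.mul_sum]
  have h2 : (∑' p, Gaux y r p) = ∑' l : ℕ, ∑' j : ℕ, Gaux y r (j, l) := by
    rw [Summable.tsum_prod' hG hcol]
    exact (Summable.tsum_comm' (f := fun j l => Gaux y r (j, l)) hG hcol hrow).symm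
  have h3 : ∀ l : ℕ, (∑' j : ℕ, Gaux y r (j, l)) =
      -(Real.exp (-r)) * ((-r) ^ l / ((l.factorial : ℝ)) ^ 2 *
        ∫ u in (0:ℝ)..y, (y - u) ^ l * Real.exp (-u)) := by
    intro l
    have hthis := Summable.sum_add_tsum_nat_add (f := fun j => Gaux y r (j, l)) (l + 1) (hrow l)
    have hhead : (∑ i ∈ Finset.range (l + 1), Gaux y r (i, l)) = 0 :=
      Finset.sum_eq_zero (fun i hi => Gaux_zero (by simp only [Finset.mem_range] at hi; omega))
    rw [hhead, zero_add] at hthis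
    have hterm : ∀ i : ℕ, Gaux y r (i + (l + 1), l) =
        (-y) ^ (i + (l + 1)) / (((i + (l + 1)).factorial : ℝ)) *
          (Real.exp (-r) * (r ^ l / (l.factorial : ℝ))) := by
      intro i
      exact Gaux_pos (by omega)
    have htail : (∑' i : ℕ, (-y) ^ (i + (l + 1)) / (((i + (l + 1)).factorial : ℝ)))
        = Real.exp (-y) - ∑ k ∈ Finset.range (l + 1), (-y) ^ k / (k.factorial : ℝ) := by
      have hs := Real.summable_pow_div_factorial (-y)
      have h' := Summable.sum_add_tsum_nat_add (f := fun n => (-y) ^ n / (n.factorial : ℝ)) (l + 1) hs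
      rw [← exp_tsum] at h'
      linarith
    calc (∑' j : ℕ, Gaux y r (j, l)) = ∑' i : ℕ, Gaux y r (i + (l + 1), l) := hthis.symm
      _ = ∑' i : ℕ, ((-y) ^ (i + (l + 1)) / (((i + (l + 1)).factorial : ℝ)) *
            (Real.exp (-r) * (r ^ l / (l.factorial : ℝ)))) := tsum_congr hterm
      _ = (∑' i : ℕ, (-y) ^ (i + (l + 1)) / (((i + (l + 1)).factorial : ℝ))) *
            (Real.exp (-r) * (r ^ l / (l.factorial : ℝ))) := tsum_mul_right
      _ = (Real.exp (-y) - ∑ k ∈ Finset.range (l + 1), (-y) ^ k / (k.factorial : ℝ)) *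
            (Real.exp (-r) * (r ^ l / (l.factorial : ℝ))) := by rw [htail]
      _ = -(Real.exp (-r)) * ((-r) ^ l / ((l.factorial : ℝ)) ^ 2 *
            ∫ u in (0:ℝ)..y, (y - u) ^ l * Real.exp (-u)) := by
          rw [J_eq]
          have hrl : (-r) ^ l * (-1) ^ l = r ^ l := by rw [← mul_pow]; norm_num
          have hne : (l.factorial : ℝ) ≠ 0 := by positivity
          have h2l : ((-1:ℝ)) ^ (l * 2) = 1 := by rw [pow_mul, sq, ← mul_pow]; norm_num
          field_simp
          linear_combination (-(Real.exp (-y) - ∑ k ∈ Finset.range (l + 1), (-y) ^ k / (k.factorial : ℝ))) * hrl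
  set F : ℕ → ℝ → ℝ := fun l u => (-r) ^ l / ((l.factorial : ℝ)) ^ 2 *
    ((y - u) ^ l * Real.exp (-u)) with hFdef
  have hFint : ∀ l, IntegrableOn (F l) (Set.Ioc 0 y) := by
    intro l
    exact (by fun_prop : Continuous (F l)).integrableOn_Ioc
  have hFbd : ∀ l, ∀ u ∈ Set.Ioc 0 y, ‖F l u‖ ≤ (r * y) ^ l / (l.factorial : ℝ) := by
    intro l u hu
    rw [hFdef]
    dsimp only
    simp only [norm_mul, norm_div, norm_pow, norm_neg, Real.norm_eq_abs]
    rw [abs_of_nonneg hr, abs_of_nonneg (by positivity : (0:ℝ) ≤ (l.factorial:ℝ)),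
      abs_of_nonneg (Real.exp_pos _).le, abs_of_nonneg (by linarith [hu.2] : (0:ℝ) ≤ y - u)]
    have h1 : (y - u) ^ l ≤ y ^ l := by
      apply pow_le_pow_left₀ (by linarith [hu.2]) (by linarith [hu.1])
    have h2 : Real.exp (-u) ≤ 1 := by
      rw [Real.exp_le_one_iff]; linarith [hu.1]
    have h3 : ((l.factorial : ℝ)) ≤ ((l.factorial : ℝ)) ^ 2 := by
      have : (1:ℝ) ≤ (l.factorial : ℝ) := by exact_mod_cast Nat.one_le_iff_ne_zero.2 l.factorial_ne_zero
      nlinarith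
    calc r ^ l / ((l.factorial : ℝ)) ^ 2 * ((y - u) ^ l * Real.exp (-u))
        ≤ r ^ l / ((l.factorial : ℝ)) ^ 2 * (y ^ l * 1) := by
          apply mul_le_mul_of_nonneg_left _ (by positivity)
          exact mul_le_mul h1 h2 (Real.exp_pos _).le (by positivity)
      _ = r ^ l * y ^ l / ((l.factorial : ℝ)) ^ 2 := by ring
      _ ≤ r ^ l * y ^ l / (l.factorial : ℝ) := by
          apply div_le_div_of_nonneg_left (by positivity) (by positivity) h3
      _ = (r * y) ^ l / (l.factorial : ℝ) := by rw [mul_pow]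
  have hnormsum : Summable (fun l => ∫ u in Set.Ioc 0 y, ‖F l u‖) := by
    apply Summable.of_nonneg_of_le
      (fun l => integral_nonneg fun u => norm_nonneg _) (fun l => ?_)
      (((Real.summable_pow_div_factorial (r * y)).mul_right y))
    calc (∫ u in Set.Ioc 0 y, ‖F l u‖)
        ≤ ∫ _ in Set.Ioc 0 y, ((r * y) ^ l / (l.factorial : ℝ)) := by
          apply setIntegral_mono_on ((hFint l).norm)
            (integrableOn_const (by rw [Real.volume_Ioc]; exact ENNReal.ofReal_ne_top))
            measurableSet_Ioc (hFbd l)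
      _ = (r * y) ^ l / (l.factorial : ℝ) * y := by
          rw [setIntegral_const, smul_eq_mul, Real.volume_real_Ioc_of_le hy, sub_zero,
            mul_comm]
  have h4 : (∑' l : ℕ, ((-r) ^ l / ((l.factorial : ℝ)) ^ 2 *
      ∫ u in (0:ℝ)..y, (y - u) ^ l * Real.exp (-u)))
      = ∫ u in Set.Ioc 0 y, (Real.exp (-u) *
          ∑' l : ℕ, (-(r * (y - u))) ^ l / ((l.factorial : ℝ)) ^ 2) := by
    have step : ∀ l : ℕ, (-r) ^ l / ((l.factorial : ℝ)) ^ 2 *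
        (∫ u in (0:ℝ)..y, (y - u) ^ l * Real.exp (-u)) = ∫ u in Set.Ioc 0 y, F l u := by
      intro l
      rw [intervalIntegral.integral_of_le hy, ← integral_const_mul]
    rw [tsum_congr step, integral_tsum_of_summable_integral_norm hFint hnormsum]
    refine setIntegral_congr_fun measurableSet_Ioc (fun u _ => ?_)
    have hterm : ∀ l : ℕ, F l u
        = (-(r * (y - u))) ^ l / ((l.factorial : ℝ)) ^ 2 * Real.exp (-u) := by
      intro l
      rw [hFdef]
      dsimp only
      rw [show -(r * (y - u)) = (-r) * (y - u) by ring, mul_pow]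
      ring
    rw [tsum_congr hterm, tsum_mul_right, mul_comm]
  have hIexp : (∫ u in Set.Ioc 0 y, Real.exp (-u)) = 1 - Real.exp (-y) := by
    rw [← intervalIntegral.integral_of_le hy]
    have h0 := J_eq y 0
    simp only [pow_zero, one_mul, pow_one, Finset.range_one, Finset.sum_singleton,
      Nat.factorial_zero, Nat.cast_one, div_one] at h0
    rw [h0, Finset.sum_range_one]
    norm_num
  have hb : |∫ u in Set.Ioc 0 y, (Real.exp (-u) *
      ∑' l : ℕ, (-(r * (y - u))) ^ l / ((l.factorial : ℝ)) ^ 2)| ≤ 1 - Real.exp (-y) := by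
    calc |∫ u in Set.Ioc 0 y, (Real.exp (-u) *
          ∑' l : ℕ, (-(r * (y - u))) ^ l / ((l.factorial : ℝ)) ^ 2)|
        ≤ ∫ u in Set.Ioc 0 y, ‖Real.exp (-u) *
            ∑' l : ℕ, (-(r * (y - u))) ^ l / ((l.factorial : ℝ)) ^ 2‖ := by
          rw [← Real.norm_eq_abs]
          exact norm_integral_le_integral_norm _
      _ ≤ ∫ u in Set.Ioc 0 y, Real.exp (-u) := by
          apply integral_mono_of_nonneg (ae_of_all _ fun u => norm_nonneg _)
            ((by fun_prop : Continuous fun u : ℝ => Real.exp (-u)).integrableOn_Ioc)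
          refine (ae_restrict_iff' measurableSet_Ioc).2 (ae_of_all _ fun u hu => ?_)
          dsimp only
          rw [norm_mul, Real.norm_eq_abs, Real.norm_eq_abs, abs_of_nonneg (Real.exp_pos _).le]
          have hz : 0 ≤ r * (y - u) := mul_nonneg hr (by linarith [hu.2])
          have hb1 := bessel_bound hz
          calc Real.exp (-u) * |∑' l : ℕ, (-(r * (y - u))) ^ l / ((l.factorial : ℝ)) ^ 2|
              ≤ Real.exp (-u) * 1 := mul_le_mul_of_nonneg_left hb1 (Real.exp_pos _).le
            _ = Real.exp (-u) := mul_one _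
      _ = 1 - Real.exp (-y) := hIexp
  rw [h1, h2, tsum_congr h3, tsum_mul_left, h4, abs_mul, abs_neg,
    abs_of_nonneg (Real.exp_pos _).le]
  exact mul_le_mul_of_nonneg_left hb (Real.exp_pos _).le
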